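/- If a randomized mechanism satisfies ξ-maximum Bayesian privacy with respect to every prior distribution on a finite input space, then it satisfies 2ξ-local differential privacy. -/

import Mathlib

open Real

/-- If a mechanism satisfies ξ-MBP with respect to every prior on a finite
input space, then it satisfies 2ξ-LDP. `f d w` is `f_{W|D}(w|d)`. -/
theorem mbp_implies_two_ldp {D W : Type*} [Fintype D] [Fintype W] [Nonempty D]
    (ξ : ℝ) (f : D → W → ℝ)
    (hf_pos : ∀ d w, 0 < f d w)
    (hMBP : ∀ p : D → ℝ, (∀ d, 0 < p d) → (∑ d, p d = 1) →
      ∀ (d : D) (w : W),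
        Real.exp (-ξ) ≤ (f d w * p d / ∑ d', f d' w * p d') / p d ∧
        (f d w * p d / ∑ d', f d' w * p d') / p d ≤ Real.exp ξ) :
    ∀ (d d' : D) (w : W), f d w ≤ Real.exp (2 * ξ) * f d' w := by
  intro d d' w
  set n := (Fintype.card D : ℝ) with hn
  have hnpos : 0 < n := by
    rw [hn]
    exact_mod_cast Fintype.card_pos (α := D)
  set p : D → ℝ := fun _ => 1 / n with hp
  have hppos : ∀ d, 0 < p d := fun _ => by positivity
  have hpsum : ∑ d, p d = 1 := by
    simp only [hp, Finset.sum_const, nsmul_eq_mul]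
    field_simp
    simp [hn]
  set S : ℝ := ∑ d'', f d'' w * p d'' with hS
  have hSpos : 0 < S := by
    apply Finset.sum_pos
    · intro i _; exact mul_pos (hf_pos i w) (hppos i)
    · exact Finset.univ_nonempty
  have h1 := (hMBP p hppos hpsum d w).2
  have h2 := (hMBP p hppos hpsum d' w).1
  have hpne : p d ≠ 0 := (hppos d).ne'
  have hpne' : p d' ≠ 0 := (hppos d').ne'
  have e1 : (f d w * p d / S) / p d = f d w / S := by field_simp
  have e2 : (f d' w * p d' / S) / p d' = f d' w / S := by field_simp
  rw [e1] at h1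
  rw [e2] at h2
  -- h1 : f d w / S ≤ exp ξ, h2 : exp (-ξ) ≤ f d' w / S
  have hfd : f d w ≤ Real.exp ξ * S := by
    rw [div_le_iff₀ hSpos] at h1
    linarith
  have hSle : S ≤ Real.exp ξ * f d' w := by
    rw [le_div_iff₀ hSpos] at h2
    calc S = Real.exp ξ * (Real.exp (-ξ) * S) := by
            rw [← mul_assoc, ← Real.exp_add]; simp
      _ ≤ Real.exp ξ * f d' w := by
            exact mul_le_mul_of_nonneg_left h2 (Real.exp_pos ξ).le
  calc f d w ≤ Real.exp ξ * S := hfd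
    _ ≤ Real.exp ξ * (Real.exp ξ * f d' w) := mul_le_mul_of_nonneg_left hSle (Real.exp_pos ξ).le
    _ = Real.exp (2 * ξ) * f d' w := by rw [← mul_assoc, ← Real.exp_add]; ring_nf
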